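/- arXiv:1604.05759 — 7 statements merged into one kernel-verified Lean document; each statement's English description precedes it below -/
import Mathlib

section
/- Let −3 < ϱ < 0. There exists a constant C > 0 such that for every v ∈ ℝ³: C^{−1}(1 + |v|²)^{ϱ/2} ≤ ∫_{ℝ³} |u − v|^ϱ e^{−|u|²/2} du ≤ C(1 + |v|²)^{ϱ/2}. (This is the two-sided bound on the soft-potential collision frequency, which equals this integral up to the constant factor obtained by integrating the angular kernel over the sphere.) -/
open MeasureTheory
open Metric Set
open scoped RealInnerProductSpace

private lemma gauss_int (b : ℝ) (hb : 0 < b) :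
    Integrable (fun u : EuclideanSpace ℝ (Fin 3) => Real.exp (-(b * ‖u‖ ^ 2))) := by
  have h := GaussianFourier.integrable_cexp_neg_mul_sq_norm_add
    (V := EuclideanSpace ℝ (Fin 3)) (b := (b : ℂ)) (by simpa using hb) 0 0
  refine h.norm.congr (Filter.Eventually.of_forall fun v => ?_)
  have : ((‖v‖ : ℂ) ^ 2).re = ‖v‖ ^ 2 := by norm_cast
  simp [Complex.norm_exp, neg_mul, this]

private lemma sing_int (ϱ : ℝ) (h1 : -3 < ϱ) (h2 : ϱ < 0) :
    Integrable ((ball (0 : EuclideanSpace ℝ (Fin 3)) 1).indicator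
      (fun w => ‖w‖ ^ ϱ)) := by
  set f : EuclideanSpace ℝ (Fin 3) → ℝ :=
    (ball (0 : EuclideanSpace ℝ (Fin 3)) 1).indicator (fun w => ‖w‖ ^ ϱ) with hf
  have hmeas : Measurable f :=
    Measurable.indicator (by fun_prop) measurableSet_ball
  have hnn : 0 ≤ f := by
    intro a
    exact Set.indicator_nonneg (fun w _ => Real.rpow_nonneg (norm_nonneg w) ϱ) a
  refine ⟨hmeas.aestronglyMeasurable, ?_⟩
  rw [HasFiniteIntegral, lintegral_enorm_of_nonneg hnn,
    lintegral_eq_lintegral_meas_le volume (Filter.Eventually.of_forall hnn)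
      hmeas.aemeasurable]
  set mB := volume (ball (0 : EuclideanSpace ℝ (Fin 3)) 1) with hmB
  have h_sub1 : ∀ t : ℝ, 0 < t →
      {a : EuclideanSpace ℝ (Fin 3) | t ≤ f a} ⊆ ball 0 1 := by
    intro t ht a ha
    by_contra hb
    have ha' : t ≤ f a := ha
    rw [hf, Set.indicator_of_notMem hb] at ha'
    exact absurd ha' (not_le.mpr ht)
  have h_sub2 : ∀ t : ℝ, 1 < t →
      {a : EuclideanSpace ℝ (Fin 3) | t ≤ f a} ⊆ closedBall 0 (t ^ ϱ⁻¹) := by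
    intro t ht a ha
    have ht0 : (0:ℝ) < t := lt_trans one_pos ht
    have hmem : a ∈ ball (0 : EuclideanSpace ℝ (Fin 3)) 1 := h_sub1 t ht0 ha
    have ha' : t ≤ f a := ha
    rw [hf, Set.indicator_of_mem hmem] at ha'
    have hna : 0 < ‖a‖ := by
      rcases eq_or_lt_of_le (norm_nonneg a) with h | h
      · exfalso
        rw [← h, Real.zero_rpow (ne_of_lt h2)] at ha'
        linarith
      · exact h
    rw [mem_closedBall_zero_iff]
    exact (Real.le_rpow_inv_iff_of_neg hna ht0 h2).mpr ha'
  calc ∫⁻ t in Set.Ioi (0:ℝ), volume {a | t ≤ f a}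
      ≤ ∫⁻ t in Set.Ioc (0:ℝ) 1 ∪ Set.Ioi 1, volume {a | t ≤ f a} :=
        lintegral_mono_set Set.Ioi_subset_Ioc_union_Ioi
    _ ≤ (∫⁻ t in Set.Ioc (0:ℝ) 1, volume {a | t ≤ f a}) +
        ∫⁻ t in Set.Ioi (1:ℝ), volume {a | t ≤ f a} := lintegral_union_le _ _ _
    _ < ⊤ := by
        refine ENNReal.add_lt_top.2 ⟨?_, ?_⟩
        · calc (∫⁻ t in Set.Ioc (0:ℝ) 1, volume {a | t ≤ f a})
              ≤ ∫⁻ _ in Set.Ioc (0:ℝ) 1, mB := by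
                refine setLIntegral_mono' measurableSet_Ioc fun t ht => ?_
                exact measure_mono (h_sub1 t ht.1)
            _ = mB * volume (Set.Ioc (0:ℝ) 1) := setLIntegral_const _ _
            _ < ⊤ := by
                refine ENNReal.mul_lt_top measure_ball_lt_top ?_
                simp [Real.volume_Ioc]
        · have hlt : ϱ⁻¹ * 3 < -1 := by
            rw [inv_mul_eq_div, div_lt_iff_of_neg h2]
            linarith
          calc (∫⁻ t in Set.Ioi (1:ℝ), volume {a | t ≤ f a})
              ≤ ∫⁻ t in Set.Ioi (1:ℝ), ENNReal.ofReal (t ^ (ϱ⁻¹ * 3)) * mB := by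
                refine setLIntegral_mono' measurableSet_Ioi fun t ht => ?_
                have ht1 : (1:ℝ) < t := ht
                have ht0 : (0:ℝ) < t := lt_trans one_pos ht1
                have hr0 : (0:ℝ) ≤ t ^ ϱ⁻¹ := Real.rpow_nonneg ht0.le _
                calc volume {a | t ≤ f a}
                    ≤ volume (closedBall (0 : EuclideanSpace ℝ (Fin 3)) (t ^ ϱ⁻¹)) :=
                      measure_mono (h_sub2 t ht1)
                  _ = ENNReal.ofReal ((t ^ ϱ⁻¹) ^
                        Module.finrank ℝ (EuclideanSpace ℝ (Fin 3))) * mB :=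
                      Measure.addHaar_closedBall _ _ hr0
                  _ = ENNReal.ofReal (t ^ (ϱ⁻¹ * 3)) * mB := by
                      rw [finrank_euclideanSpace_fin, ← Real.rpow_natCast (t ^ ϱ⁻¹) 3,
                        ← Real.rpow_mul ht0.le]
                      norm_num
            _ = (∫⁻ t in Set.Ioi (1:ℝ), ENNReal.ofReal (t ^ (ϱ⁻¹ * 3))) * mB :=
                lintegral_mul_const' _ _ measure_ball_lt_top.ne
            _ < ⊤ := ENNReal.mul_lt_top
                ((integrableOn_Ioi_rpow_of_lt hlt one_pos).setLIntegral_lt_top)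
                measure_ball_lt_top


set_option maxHeartbeats 1000000 in
/-- Two-sided bound on the soft-potential collision frequency:
for `-3 < ϱ < 0` there is `C > 0` with
`C⁻¹ (1+|v|²)^{ϱ/2} ≤ ∫ |u - v|^ϱ e^{-|u|²/2} du ≤ C (1+|v|²)^{ϱ/2}`. -/
theorem collision_frequency_two_sided_bound
    (ϱ : ℝ) (hϱ₁ : -3 < ϱ) (hϱ₂ : ϱ < 0) :
    ∃ C : ℝ, 0 < C ∧ ∀ v : EuclideanSpace ℝ (Fin 3),
      C⁻¹ * (1 + ‖v‖ ^ 2) ^ (ϱ / 2) ≤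
        (∫ u : EuclideanSpace ℝ (Fin 3), ‖u - v‖ ^ ϱ * Real.exp (-‖u‖ ^ 2 / 2)) ∧
      (∫ u : EuclideanSpace ℝ (Fin 3), ‖u - v‖ ^ ϱ * Real.exp (-‖u‖ ^ 2 / 2)) ≤
        C * (1 + ‖v‖ ^ 2) ^ (ϱ / 2) := by
  classical
  have hg : Integrable (fun u : EuclideanSpace ℝ (Fin 3) => Real.exp (-‖u‖ ^ 2 / 2)) := by
    refine (gauss_int (1/2) (by norm_num)).congr (Filter.Eventually.of_forall fun u => ?_)
    ring_nf
  have hg4 : Integrable (fun u : EuclideanSpace ℝ (Fin 3) => Real.exp (-‖u‖ ^ 2 / 4)) := by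
    refine (gauss_int (1/4) (by norm_num)).congr (Filter.Eventually.of_forall fun u => ?_)
    ring_nf
  set H : EuclideanSpace ℝ (Fin 3) → ℝ :=
    (ball (0 : EuclideanSpace ℝ (Fin 3)) 1).indicator (fun w => ‖w‖ ^ ϱ) with hHdef
  have hH : Integrable H := sing_int ϱ hϱ₁ hϱ₂
  have hHnn : ∀ w, 0 ≤ H w := fun w =>
    Set.indicator_nonneg (fun w _ => Real.rpow_nonneg (norm_nonneg w) ϱ) w
  have pt : ∀ (w : EuclideanSpace ℝ (Fin 3)) (c : ℝ), 0 < c → c ≤ 1 →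
      ‖w‖ ^ ϱ * c ≤ H w + c := by
    intro w c hc hc1
    by_cases hw : w ∈ ball (0 : EuclideanSpace ℝ (Fin 3)) 1
    · have hH1 : H w = ‖w‖ ^ ϱ := Set.indicator_of_mem hw _
      have h2 : ‖w‖ ^ ϱ * c ≤ ‖w‖ ^ ϱ :=
        mul_le_of_le_one_right (Real.rpow_nonneg (norm_nonneg w) ϱ) hc1
      rw [hH1]
      linarith
    · have hw1 : 1 ≤ ‖w‖ := by
        by_contra hlt
        exact hw (mem_ball_zero_iff.mpr (lt_of_not_ge hlt))
      have h1 : ‖w‖ ^ ϱ ≤ 1 := Real.rpow_le_one_of_one_le_of_nonpos hw1 hϱ₂.le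
      have h2 : ‖w‖ ^ ϱ * c ≤ c := by
        calc ‖w‖ ^ ϱ * c ≤ 1 * c := mul_le_mul_of_nonneg_right h1 hc.le
          _ = c := one_mul c
      linarith [hHnn w]
  set G : ℝ := ∫ u : EuclideanSpace ℝ (Fin 3), Real.exp (-‖u‖ ^ 2 / 2) with hGdef
  set G4 : ℝ := ∫ u : EuclideanSpace ℝ (Fin 3), Real.exp (-‖u‖ ^ 2 / 4) with hG4def
  set κ : ℝ := ∫ w, H w with hκdef
  have hGnn : 0 ≤ G := integral_nonneg fun u => (Real.exp_pos _).le
  have hG4nn : 0 ≤ G4 := integral_nonneg fun u => (Real.exp_pos _).le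
  have hκnn : 0 ≤ κ := integral_nonneg hHnn
  set Vol : ℝ := (volume (ball (0 : EuclideanSpace ℝ (Fin 3)) 1)).toReal with hVdef
  have hVpos : 0 < Vol := ENNReal.toReal_pos
    (ne_of_gt (measure_ball_pos volume _ one_pos)) measure_ball_lt_top.ne
  set c₀ : ℝ := 2 ^ (ϱ/2) * (Real.exp (-(1:ℝ)/2) * Vol) with hc₀def
  have hc₀pos : 0 < c₀ := by positivity
  have hA2nn : (0:ℝ) ≤ 2 ^ (-ϱ/2) * (2 ^ (-ϱ) * G + 1024 * (κ + G4)) := by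
    have h1 : (0:ℝ) ≤ 2 ^ (-ϱ/2) := Real.rpow_nonneg (by norm_num) _
    have h2 : (0:ℝ) ≤ 2 ^ (-ϱ) := Real.rpow_nonneg (by norm_num) _
    exact mul_nonneg h1 (add_nonneg (mul_nonneg h2 hGnn)
      (mul_nonneg (by norm_num) (add_nonneg hκnn hG4nn)))
  have hA1nn : (0:ℝ) ≤ 2 ^ (-ϱ/2) * (κ + G) :=
    mul_nonneg (Real.rpow_nonneg (by norm_num) _) (add_nonneg hκnn hGnn)
  set Cu : ℝ := 2 ^ (-ϱ/2) * (κ + G) +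
      2 ^ (-ϱ/2) * (2 ^ (-ϱ) * G + 1024 * (κ + G4)) with hCudef
  have hCunn : 0 ≤ Cu := add_nonneg hA1nn hA2nn
  refine ⟨Cu + c₀⁻¹, by positivity, fun v => ?_⟩
  set P : ℝ := (1 + ‖v‖ ^ 2) ^ (ϱ/2) with hPdef
  have hPpos : 0 < P := Real.rpow_pos_of_pos (by positivity) _
  set f : EuclideanSpace ℝ (Fin 3) → ℝ :=
    fun u => ‖u - v‖ ^ ϱ * Real.exp (-‖u‖ ^ 2 / 2) with hfdef
  have hfnn : ∀ u, 0 ≤ f u := fun u =>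
    mul_nonneg (Real.rpow_nonneg (norm_nonneg _) _) (Real.exp_pos _).le
  have hfm : Measurable f := by fun_prop
  have hv : Integrable (fun u => H (u - v)) := hH.comp_sub_right v
  have hIv : (∫ u, H (u - v)) = κ := by
    rw [hκdef]; exact integral_sub_right_eq_self H v
  have hfle : ∀ u, f u ≤ H (u - v) + Real.exp (-‖u‖ ^ 2 / 2) := by
    intro u
    exact pt (u - v) _ (Real.exp_pos _)
      (Real.exp_le_one_iff.mpr (by nlinarith [sq_nonneg ‖u‖]))
  have hfint : Integrable f := by
    refine (hv.add hg).mono' hfm.aestronglyMeasurable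
      (Filter.Eventually.of_forall fun u => ?_)
    rw [Real.norm_of_nonneg (hfnn u)]
    exact hfle u
  constructor
  · -- LOWER BOUND
    have hne : ∀ᵐ u : EuclideanSpace ℝ (Fin 3), u ≠ v := by
      rw [ae_iff]
      have hset : {u : EuclideanSpace ℝ (Fin 3) | ¬ u ≠ v} = {v} := by ext u; simp
      rw [hset]
      exact measure_singleton v
    set bnd : EuclideanSpace ℝ (Fin 3) → ℝ :=
      (ball (0 : EuclideanSpace ℝ (Fin 3)) 1).indicator
        (fun _ => (1 + ‖v‖) ^ ϱ * Real.exp (-(1:ℝ)/2)) with hbdef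
    have hbint : Integrable bnd :=
      ((integrableOn_const_iff).mpr (Or.inr measure_ball_lt_top)).integrable_indicator
        measurableSet_ball
    have hble : ∀ᵐ u, bnd u ≤ f u := by
      filter_upwards [hne] with u hu
      by_cases hb : u ∈ ball (0 : EuclideanSpace ℝ (Fin 3)) 1
      · rw [hbdef, Set.indicator_of_mem hb]
        have hu1 : ‖u‖ < 1 := mem_ball_zero_iff.mp hb
        have h1 : ‖u - v‖ ≤ 1 + ‖v‖ := by
          calc ‖u - v‖ ≤ ‖u‖ + ‖v‖ := norm_sub_le u v
            _ ≤ 1 + ‖v‖ := by linarith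
        have h0 : 0 < ‖u - v‖ := norm_pos_iff.mpr (sub_ne_zero.mpr hu)
        have r1 : (1 + ‖v‖) ^ ϱ ≤ ‖u - v‖ ^ ϱ :=
          Real.rpow_le_rpow_of_nonpos h0 h1 hϱ₂.le
        have r2 : Real.exp (-(1:ℝ)/2) ≤ Real.exp (-‖u‖ ^ 2 / 2) :=
          Real.exp_le_exp.mpr (by nlinarith [norm_nonneg u])
        exact mul_le_mul r1 r2 (Real.exp_pos _).le (Real.rpow_nonneg (norm_nonneg _) _)
      · rw [hbdef, Set.indicator_of_notMem hb]
        exact hfnn u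
    have hbI : (∫ u, bnd u) = Vol • ((1 + ‖v‖) ^ ϱ * Real.exp (-(1:ℝ)/2)) := by
      rw [hbdef]
      exact integral_indicator_const _ measurableSet_ball
    have hlow := integral_mono_ae hbint hfint hble
    rw [hbI] at hlow
    have hr : 2 ^ (ϱ/2) * P ≤ (1 + ‖v‖) ^ ϱ := by
      have e1 : ((1 + ‖v‖) ^ (2:ℕ)) ^ (ϱ/2) = (1 + ‖v‖) ^ ϱ := by
        rw [← Real.rpow_natCast (1 + ‖v‖) 2, ← Real.rpow_mul (by positivity)]
        congr 1
        push_cast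
        ring
      have e2 : (2 * (1 + ‖v‖ ^ 2)) ^ (ϱ/2) = 2 ^ (ϱ/2) * P := by
        rw [hPdef, Real.mul_rpow (by norm_num) (by positivity)]
      have e3 : (1 + ‖v‖) ^ (2:ℕ) ≤ 2 * (1 + ‖v‖ ^ 2) := by
        nlinarith [sq_nonneg (‖v‖ - 1), norm_nonneg v]
      calc 2 ^ (ϱ/2) * P = (2 * (1 + ‖v‖ ^ 2)) ^ (ϱ/2) := e2.symm
        _ ≤ ((1 + ‖v‖) ^ (2:ℕ)) ^ (ϱ/2) :=
            Real.rpow_le_rpow_of_nonpos (by positivity) e3 (by linarith)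
        _ = (1 + ‖v‖) ^ ϱ := e1
    have hCinv : (Cu + c₀⁻¹)⁻¹ ≤ c₀ := by
      have h1 : c₀⁻¹ ≤ Cu + c₀⁻¹ := le_add_of_nonneg_left hCunn
      have h2 := inv_anti₀ (by positivity) h1
      rwa [inv_inv] at h2
    calc (Cu + c₀⁻¹)⁻¹ * P ≤ c₀ * P := mul_le_mul_of_nonneg_right hCinv hPpos.le
      _ ≤ Vol • ((1 + ‖v‖) ^ ϱ * Real.exp (-(1:ℝ)/2)) := by
          rw [smul_eq_mul, hc₀def]
          have h3 := mul_le_mul_of_nonneg_left hr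
            (by positivity : (0:ℝ) ≤ Real.exp (-(1:ℝ)/2) * Vol)
          nlinarith [Real.exp_pos (-(1:ℝ)/2)]
      _ ≤ integral volume f := hlow
  · -- UPPER BOUND
    rcases le_or_gt ‖v‖ 1 with hv1 | hv1
    · have hmono := integral_mono hfint (hv.add hg) hfle
      simp only [Pi.add_apply] at hmono
      rw [integral_add hv hg, hIv] at hmono
      have hP2 : 2 ^ (ϱ/2) ≤ P := by
        rw [hPdef]
        exact Real.rpow_le_rpow_of_nonpos (by positivity) (by nlinarith [norm_nonneg v]) (by linarith)
      have h22 : (2:ℝ) ^ (-ϱ/2) * 2 ^ (ϱ/2) = 1 := by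
        rw [← Real.rpow_add (by norm_num), show -ϱ/2 + ϱ/2 = 0 by ring, Real.rpow_zero]
      calc integral volume f ≤ κ + G := hmono
        _ = 2 ^ (-ϱ/2) * (κ + G) * 2 ^ (ϱ/2) := by
            rw [mul_right_comm, h22, one_mul]
        _ ≤ 2 ^ (-ϱ/2) * (κ + G) * P := mul_le_mul_of_nonneg_left hP2 hA1nn
        _ ≤ (Cu + c₀⁻¹) * P := by
            refine mul_le_mul_of_nonneg_right ?_ hPpos.le
            have : (0:ℝ) ≤ c₀⁻¹ := by positivity
            rw [hCudef]
            linarith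
    · -- 1 < ‖v‖
      have hv0 : (0:ℝ) < ‖v‖ := lt_trans one_pos hv1
      have hvpos : (0:ℝ) < ‖v‖/2 := by linarith
      have key2 : ∀ u, f u ≤ (‖v‖/2) ^ ϱ * Real.exp (-‖u‖ ^ 2 / 2) +
          Real.exp (-‖v‖ ^ 2 / 16) * (H (u - v) + Real.exp (-‖u‖ ^ 2 / 4)) := by
        intro u
        rcases le_or_gt (‖v‖/2) ‖u - v‖ with h | h
        · have r1 : ‖u - v‖ ^ ϱ ≤ (‖v‖/2) ^ ϱ :=
            Real.rpow_le_rpow_of_nonpos hvpos h hϱ₂.le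
          have t2 : 0 ≤ Real.exp (-‖v‖ ^ 2 / 16) * (H (u - v) + Real.exp (-‖u‖ ^ 2 / 4)) :=
            mul_nonneg (Real.exp_pos _).le (add_nonneg (hHnn _) (Real.exp_pos _).le)
          have t1 : f u ≤ (‖v‖/2) ^ ϱ * Real.exp (-‖u‖ ^ 2 / 2) :=
            mul_le_mul_of_nonneg_right r1 (Real.exp_pos _).le
          linarith
        · have hu2 : ‖v‖/2 < ‖u‖ := by
            have h1 : ‖v‖ - ‖u‖ ≤ ‖v - u‖ := norm_sub_norm_le v u
            rw [norm_sub_rev] at h1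
            linarith
          have e4le1 : Real.exp (-‖u‖ ^ 2 / 4) ≤ 1 :=
            Real.exp_le_one_iff.mpr (by nlinarith [sq_nonneg ‖u‖])
          have e1 : ‖u - v‖ ^ ϱ * Real.exp (-‖u‖ ^ 2 / 4) ≤
              H (u - v) + Real.exp (-‖u‖ ^ 2 / 4) :=
            pt (u - v) _ (Real.exp_pos _) e4le1
          have e3 : Real.exp (-‖u‖ ^ 2 / 4) ≤ Real.exp (-‖v‖ ^ 2 / 16) :=
            Real.exp_le_exp.mpr (by nlinarith)
          have esplit : Real.exp (-‖u‖ ^ 2 / 2) =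
              Real.exp (-‖u‖ ^ 2 / 4) * Real.exp (-‖u‖ ^ 2 / 4) := by
            rw [← Real.exp_add]
            ring_nf
          have t0 : 0 ≤ (‖v‖/2) ^ ϱ * Real.exp (-‖u‖ ^ 2 / 2) :=
            mul_nonneg (Real.rpow_nonneg hvpos.le _) (Real.exp_pos _).le
          calc f u = (‖u - v‖ ^ ϱ * Real.exp (-‖u‖ ^ 2 / 4)) * Real.exp (-‖u‖ ^ 2 / 4) := by
                simp only [hfdef]
                rw [esplit, mul_assoc]
            _ ≤ (H (u - v) + Real.exp (-‖u‖ ^ 2 / 4)) * Real.exp (-‖v‖ ^ 2 / 16) :=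
                mul_le_mul e1 e3 (Real.exp_pos _).le
                  (add_nonneg (hHnn _) (Real.exp_pos _).le)
            _ = Real.exp (-‖v‖ ^ 2 / 16) * (H (u - v) + Real.exp (-‖u‖ ^ 2 / 4)) :=
                mul_comm _ _
            _ ≤ (‖v‖/2) ^ ϱ * Real.exp (-‖u‖ ^ 2 / 2) +
                Real.exp (-‖v‖ ^ 2 / 16) * (H (u - v) + Real.exp (-‖u‖ ^ 2 / 4)) :=
                le_add_of_nonneg_left t0
      have hrhs : Integrable (fun u : EuclideanSpace ℝ (Fin 3) =>
          (‖v‖/2) ^ ϱ * Real.exp (-‖u‖ ^ 2 / 2) +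
          Real.exp (-‖v‖ ^ 2 / 16) * (H (u - v) + Real.exp (-‖u‖ ^ 2 / 4))) :=
        (hg.const_mul _).add ((hv.add hg4).const_mul _)
      have hi1 : Integrable (fun u : EuclideanSpace ℝ (Fin 3) =>
          (‖v‖/2) ^ ϱ * Real.exp (-‖u‖ ^ 2 / 2)) := hg.const_mul _
      have hiadd : Integrable (fun u : EuclideanSpace ℝ (Fin 3) =>
          H (u - v) + Real.exp (-‖u‖ ^ 2 / 4)) := hv.add hg4
      have hi2 : Integrable (fun u : EuclideanSpace ℝ (Fin 3) =>
          Real.exp (-‖v‖ ^ 2 / 16) * (H (u - v) + Real.exp (-‖u‖ ^ 2 / 4))) :=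
        hiadd.const_mul _
      have hmono := integral_mono hfint hrhs key2
      rw [integral_add hi1 hi2, integral_const_mul, integral_const_mul,
        integral_add hv hg4, hIv] at hmono
      -- auxiliary bounds
      have hb0 : ‖v‖ ^ ϱ ≤ 2 ^ (-ϱ/2) * P := by
        have e1 : (‖v‖ ^ 2) ^ (ϱ/2) = ‖v‖ ^ ϱ := by
          rw [← Real.rpow_natCast ‖v‖ 2, ← Real.rpow_mul (norm_nonneg v)]
          congr 1
          push_cast
          ring
        have e3 : (1 + ‖v‖ ^ 2)/2 ≤ ‖v‖ ^ 2 := by nlinarith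
        have e4 : ((1 + ‖v‖ ^ 2)/2) ^ (ϱ/2) = 2 ^ (-ϱ/2) * P := by
          rw [hPdef, Real.div_rpow (by positivity) (by norm_num), neg_div,
            Real.rpow_neg (by norm_num)]
          ring
        calc ‖v‖ ^ ϱ = (‖v‖ ^ 2) ^ (ϱ/2) := e1.symm
          _ ≤ ((1 + ‖v‖ ^ 2)/2) ^ (ϱ/2) :=
              Real.rpow_le_rpow_of_nonpos (by positivity) e3 (by linarith)
          _ = 2 ^ (-ϱ/2) * P := e4
      have b1 : (‖v‖/2) ^ ϱ = 2 ^ (-ϱ) * ‖v‖ ^ ϱ := by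
        rw [Real.div_rpow (norm_nonneg v) (by norm_num), Real.rpow_neg (by norm_num)]
        ring
      have hexp : ‖v‖ ^ 4 / 1024 ≤ Real.exp (‖v‖ ^ 2 / 16) := by
        have h1 := Real.add_one_le_exp (‖v‖ ^ 2 / 32)
        have h2 : Real.exp (‖v‖ ^ 2 / 16) =
            Real.exp (‖v‖ ^ 2 / 32) * Real.exp (‖v‖ ^ 2 / 32) := by
          rw [← Real.exp_add]
          ring_nf
        nlinarith [sq_nonneg ‖v‖, sq_nonneg (‖v‖ ^ 2 / 32)]
      have b2 : Real.exp (-‖v‖ ^ 2 / 16) ≤ 1024 * ‖v‖ ^ ϱ := by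
        have hx : Real.exp (-‖v‖ ^ 2 / 16) = (Real.exp (‖v‖ ^ 2 / 16))⁻¹ := by
          rw [← Real.exp_neg]
          ring_nf
        have h4pos : (0:ℝ) < ‖v‖ ^ 4 / 1024 := by positivity
        have hi : (Real.exp (‖v‖ ^ 2 / 16))⁻¹ ≤ (‖v‖ ^ 4 / 1024)⁻¹ :=
          inv_anti₀ h4pos hexp
        have he : (‖v‖ ^ 4 / 1024 : ℝ)⁻¹ = 1024 * (‖v‖ ^ 4)⁻¹ := by
          field_simp
        have hr4 : ((‖v‖ ^ 4 : ℝ))⁻¹ ≤ ‖v‖ ^ ϱ := by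
          have hcast : ((‖v‖ ^ 4 : ℝ))⁻¹ = ‖v‖ ^ (-(4:ℝ)) := by
            rw [Real.rpow_neg (norm_nonneg v),
              show ((4:ℝ)) = ((4:ℕ):ℝ) by norm_num, Real.rpow_natCast]
          rw [hcast]
          exact Real.rpow_le_rpow_of_exponent_le hv1.le (by linarith)
        calc Real.exp (-‖v‖ ^ 2 / 16) = (Real.exp (‖v‖ ^ 2 / 16))⁻¹ := hx
          _ ≤ (‖v‖ ^ 4 / 1024)⁻¹ := hi
          _ = 1024 * (‖v‖ ^ 4)⁻¹ := he
          _ ≤ 1024 * ‖v‖ ^ ϱ := by linarith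
      have h2nn : (0:ℝ) ≤ 2 ^ (-ϱ) := Real.rpow_nonneg (by norm_num) _
      have h2nn' : (0:ℝ) ≤ 2 ^ (-ϱ/2) := Real.rpow_nonneg (by norm_num) _
      calc integral volume f
          ≤ (‖v‖/2) ^ ϱ * G + Real.exp (-‖v‖ ^ 2 / 16) * (κ + G4) := hmono
        _ ≤ (2 ^ (-ϱ) * (2 ^ (-ϱ/2) * P)) * G + (1024 * (2 ^ (-ϱ/2) * P)) * (κ + G4) := by
            have hbb : (‖v‖/2) ^ ϱ ≤ 2 ^ (-ϱ) * (2 ^ (-ϱ/2) * P) := by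
              rw [b1]
              exact mul_le_mul_of_nonneg_left hb0 h2nn
            have hbb2 : Real.exp (-‖v‖ ^ 2 / 16) ≤ 1024 * (2 ^ (-ϱ/2) * P) := by
              refine le_trans b2 ?_
              exact mul_le_mul_of_nonneg_left hb0 (by norm_num)
            exact add_le_add (mul_le_mul_of_nonneg_right hbb hGnn)
              (mul_le_mul_of_nonneg_right hbb2 (add_nonneg hκnn hG4nn))
        _ = (2 ^ (-ϱ/2) * (2 ^ (-ϱ) * G + 1024 * (κ + G4))) * P := by ring
        _ ≤ (Cu + c₀⁻¹) * P := by
            refine mul_le_mul_of_nonneg_right ?_ hPpos.le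
            have : (0:ℝ) ≤ c₀⁻¹ := by positivity
            rw [hCudef]
            linarith
end

section
/- Let q > 0 and 0 < θ ≤ 2 (with 0 < q < 1 when θ = 2) and ϑ ≥ 0. Then for every t ≥ 0, all u, v ∈ ℝ³ and every unit vector ω ∈ ℝ³, the post-collisional velocities v′ = v + ((u−v)·ω)ω and u′ = u − ((u−v)·ω)ω satisfy w_{q/2,θ,ϑ}(t,v) ≤ (1/2)·(w_{q,θ,ϑ}(t,u′) + w_{q,θ,ϑ}(t,v′)), where w_{q/2,θ,ϑ} denotes the weight with parameter q replaced by q/2. -/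
noncomputable section

/-- Velocity space `ℝ³`. -/
abbrev V3 : Type := EuclideanSpace ℝ (Fin 3)

/-- Post-collisional velocity `v′ = v + ((u-v)·ω)ω`. -/
def vPost (u v ω : V3) : V3 := v + (inner ℝ (u - v) ω : ℝ) • ω

/-- Post-collisional velocity `u′ = u - ((u-v)·ω)ω`. -/
def uPost (u v ω : V3) : V3 := u - (inner ℝ (u - v) ω : ℝ) • ω

/-- Time–velocity weight `w_{q,θ,ϑ}(t,v) = exp(q|v|^θ/8 + q|v|^θ/(8(1+t)^ϑ))`. -/
def wt (q θ ϑ t : ℝ) (v : V3) : ℝ :=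
  Real.exp (q * ‖v‖ ^ θ / 8 + q * ‖v‖ ^ θ / (8 * (1 + t) ^ ϑ))

/-- Real version of subadditivity of `x ^ p` for `0 ≤ p ≤ 1`. -/
lemma aux_rpow_add_le (x y p : ℝ) (hx : 0 ≤ x) (hy : 0 ≤ y) (hp : 0 ≤ p) (hp1 : p ≤ 1) :
    (x + y) ^ p ≤ x ^ p + y ^ p := by
  have h := NNReal.rpow_add_le_add_rpow x.toNNReal y.toNNReal hp hp1
  have := NNReal.coe_le_coe.mpr h
  push_cast [NNReal.coe_rpow] at this
  rwa [Real.coe_toNNReal x hx, Real.coe_toNNReal y hy] at this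

/-- Energy conservation along collisions. -/
lemma aux_energy (u v ω : V3) (hω : ‖ω‖ = 1) :
    ‖uPost u v ω‖ ^ (2 : ℕ) + ‖vPost u v ω‖ ^ (2 : ℕ) = ‖u‖ ^ (2 : ℕ) + ‖v‖ ^ (2 : ℕ) := by
  set c : ℝ := (inner ℝ (u - v) ω : ℝ) with hc
  have hu : ‖uPost u v ω‖ ^ (2 : ℕ) = ‖u‖ ^ 2 - 2 * (inner ℝ u (c • ω) : ℝ) + ‖c • ω‖ ^ 2 := by
    rw [uPost, ← norm_sub_sq_real]
  have hv : ‖vPost u v ω‖ ^ (2 : ℕ) = ‖v‖ ^ 2 + 2 * (inner ℝ v (c • ω) : ℝ) + ‖c • ω‖ ^ 2 := by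
    rw [vPost, ← norm_add_sq_real]
  have hcs : ‖c • ω‖ ^ 2 = c ^ 2 := by
    rw [norm_smul, hω, mul_one, Real.norm_eq_abs, sq_abs]
  have h1 : (inner ℝ u (c • ω) : ℝ) = c * (inner ℝ u ω : ℝ) := real_inner_smul_right u ω c
  have h2 : (inner ℝ v (c • ω) : ℝ) = c * (inner ℝ v ω : ℝ) := real_inner_smul_right v ω c
  have h3 : c = (inner ℝ u ω : ℝ) - (inner ℝ v ω : ℝ) := by rw [hc, inner_sub_left]
  rw [hu, hv, hcs, h1, h2, h3]; ring

/-- `exp((a+b)/2) ≤ (exp a + exp b)/2`. -/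
lemma aux_exp_avg (a b : ℝ) : Real.exp ((a + b) / 2) ≤ (Real.exp a + Real.exp b) / 2 := by
  have ha : Real.exp a = Real.exp (a / 2) * Real.exp (a / 2) := by
    rw [← Real.exp_add]; ring_nf
  have hb : Real.exp b = Real.exp (b / 2) * Real.exp (b / 2) := by
    rw [← Real.exp_add]; ring_nf
  have hab : Real.exp ((a + b) / 2) = Real.exp (a / 2) * Real.exp (b / 2) := by
    rw [← Real.exp_add]; ring_nf
  nlinarith [sq_nonneg (Real.exp (a / 2) - Real.exp (b / 2))]

/-- Weight splitting along collisions: `w_{q/2,θ,ϑ}(t,v) ≤ ½ (w_{q,θ,ϑ}(t,u′) + w_{q,θ,ϑ}(t,v′))`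
for all unit vectors `ω`. -/
theorem weight_le_half_add_post_collision
    (q θ ϑ : ℝ) (hq : 0 < q) (hθ₁ : 0 < θ) (hθ₂ : θ ≤ 2)
    (hqθ : θ = 2 → q < 1) (hϑ : 0 ≤ ϑ)
    (t : ℝ) (ht : 0 ≤ t) (u v ω : V3) (hω : ‖ω‖ = 1) :
    wt (q / 2) θ ϑ t v ≤ (1 / 2) * (wt q θ ϑ t (uPost u v ω) + wt q θ ϑ t (vPost u v ω)) := by
  set a := ‖uPost u v ω‖ with ha
  set b := ‖vPost u v ω‖ with hb
  have ha0 : 0 ≤ a := norm_nonneg _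
  have hb0 : 0 ≤ b := norm_nonneg _
  have hv0 : 0 ≤ ‖v‖ := norm_nonneg _
  -- step 1 : ‖v‖^θ ≤ a^θ + b^θ
  have hsq : ‖v‖ ^ (2 : ℕ) ≤ a ^ (2 : ℕ) + b ^ (2 : ℕ) := by
    have := aux_energy u v ω hω
    nlinarith [sq_nonneg ‖u‖]
  have hpow : ‖v‖ ^ θ ≤ a ^ θ + b ^ θ := by
    have e1 : ∀ x : ℝ, 0 ≤ x → x ^ θ = (x ^ (2 : ℕ)) ^ (θ / 2) := by
      intro x hx
      rw [← Real.rpow_natCast x 2, ← Real.rpow_mul hx]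
      congr 1; push_cast; ring
    have h1 : (‖v‖ ^ (2 : ℕ) : ℝ) ^ (θ / 2) ≤ ((a ^ (2 : ℕ) + b ^ (2 : ℕ) : ℝ)) ^ (θ / 2) :=
      Real.rpow_le_rpow (by positivity) hsq (by linarith)
    have h2 : ((a ^ (2 : ℕ) + b ^ (2 : ℕ) : ℝ)) ^ (θ / 2)
        ≤ (a ^ (2 : ℕ) : ℝ) ^ (θ / 2) + (b ^ (2 : ℕ) : ℝ) ^ (θ / 2) :=
      aux_rpow_add_le _ _ _ (by positivity) (by positivity) (by linarith) (by linarith)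
    rw [e1 ‖v‖ hv0, e1 a ha0, e1 b hb0]
    exact h1.trans h2
  -- step 2 : exponent bookkeeping
  have hP : (0 : ℝ) < (1 + t) ^ ϑ := Real.rpow_pos_of_pos (by linarith) ϑ
  obtain ⟨K, hK⟩ : ∃ K : ℝ, K = q / 8 + q / (8 * (1 + t) ^ ϑ) := ⟨_, rfl⟩
  have hK0 : 0 ≤ K := by rw [hK]; positivity
  have hexp : ∀ x : ℝ, q * x / 8 + q * x / (8 * (1 + t) ^ ϑ) = K * x := by
    intro x; rw [hK]; field_simp
  have hexp2 : (q / 2) * ‖v‖ ^ θ / 8 + (q / 2) * ‖v‖ ^ θ / (8 * (1 + t) ^ ϑ)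
      = (K * ‖v‖ ^ θ) / 2 := by
    rw [hK]; field_simp
  have hle : K * ‖v‖ ^ θ ≤ K * a ^ θ + K * b ^ θ := by
    have := mul_le_mul_of_nonneg_left hpow hK0
    linarith [this]
  calc wt (q / 2) θ ϑ t v = Real.exp ((K * ‖v‖ ^ θ) / 2) := by rw [wt, hexp2]
    _ ≤ Real.exp ((K * a ^ θ + K * b ^ θ) / 2) := by
        apply Real.exp_le_exp.mpr; linarith
    _ ≤ (Real.exp (K * a ^ θ) + Real.exp (K * b ^ θ)) / 2 := aux_exp_avg _ _
    _ = (1 / 2) * (wt q θ ϑ t (uPost u v ω) + wt q θ ϑ t (vPost u v ω)) := by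
        rw [wt, wt, hexp, hexp]; ring
end
end

section
/- Let −3 < ϱ < 0, 0 < θ ≤ 2, q > 0 and c > 0, and set ρ₀ = θ/(θ − ϱ), so 0 < ρ₀ < 1. Then there exist λ₀ > 0 and C ≥ 1 such that for all v ∈ ℝ³ and all t ≥ 0: exp(−c(1+|v|²)^{ϱ/2} t) · exp(−q|v|^θ/8) ≤ C · exp(−λ₀ t^{ρ₀}). -/
/-- Trading exponential weight for time decay: for `-3 < ϱ < 0`, `0 < θ ≤ 2`, `q > 0`,
`c > 0` and `ρ₀ = θ/(θ - ϱ)`, there are `λ₀ > 0` and `C ≥ 1` with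
`exp(-c(1+|v|²)^{ϱ/2} t) exp(-q|v|^θ/8) ≤ C exp(-λ₀ t^{ρ₀})` for all `v` and `t ≥ 0`. -/
theorem exp_collision_freq_weight_decay
    (ϱ θ q c ρ₀ : ℝ) (hϱ₁ : -3 < ϱ) (hϱ₂ : ϱ < 0) (hθ₁ : 0 < θ) (hθ₂ : θ ≤ 2)
    (hq : 0 < q) (hc : 0 < c) (hρ₀ : ρ₀ = θ / (θ - ϱ)) :
    0 < ρ₀ ∧ ρ₀ < 1 ∧
    ∃ lam₀ C : ℝ, 0 < lam₀ ∧ 1 ≤ C ∧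
      ∀ v : EuclideanSpace ℝ (Fin 3), ∀ t : ℝ, 0 ≤ t →
        Real.exp (-(c * (1 + ‖v‖ ^ 2) ^ (ϱ / 2) * t)) * Real.exp (-(q * ‖v‖ ^ θ / 8)) ≤
          C * Real.exp (-(lam₀ * t ^ ρ₀)) := by
  have hθϱ : 0 < θ - ϱ := by linarith
  have hρ₀pos : 0 < ρ₀ := by rw [hρ₀]; positivity
  have hρ₀lt : ρ₀ < 1 := by
    rw [hρ₀, div_lt_one hθϱ]; linarith
  set lam : ℝ := min (q / 8) (c * (2 : ℝ) ^ (ϱ / 2)) with hlamdef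
  have h2pow : (0 : ℝ) < (2 : ℝ) ^ (ϱ / 2) := Real.rpow_pos_of_pos (by norm_num) _
  have hlam : 0 < lam := lt_min (by linarith) (by positivity)
  refine ⟨hρ₀pos, hρ₀lt, lam, Real.exp lam, hlam, Real.one_le_exp hlam.le, ?_⟩
  intro v t ht
  set s := ‖v‖ with hs
  have hs0 : 0 ≤ s := norm_nonneg v
  have hA0 : (0 : ℝ) < (1 + s ^ 2) ^ (ϱ / 2) := Real.rpow_pos_of_pos (by positivity) _
  have hB0 : (0 : ℝ) ≤ q * s ^ θ / 8 := by positivity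
  -- key inequality
  have key : lam * t ^ ρ₀ ≤ c * (1 + s ^ 2) ^ (ϱ / 2) * t + q * s ^ θ / 8 + lam := by
    rcases le_or_gt t 1 with h1 | h1
    · have ht1 : t ^ ρ₀ ≤ 1 := Real.rpow_le_one ht h1 hρ₀pos.le
      have : lam * t ^ ρ₀ ≤ lam := by nlinarith
      nlinarith [mul_nonneg (mul_nonneg hc.le hA0.le) ht]
    · rcases le_total (t ^ ρ₀) (s ^ θ) with hcase | hcase
      · have h8 : lam * t ^ ρ₀ ≤ q / 8 * s ^ θ := by
          calc lam * t ^ ρ₀ ≤ (q / 8) * t ^ ρ₀ := by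
                have := min_le_left (q / 8) (c * (2 : ℝ) ^ (ϱ / 2))
                have htp : (0:ℝ) ≤ t ^ ρ₀ := Real.rpow_nonneg ht _
                nlinarith
            _ ≤ q / 8 * s ^ θ := by nlinarith
        nlinarith [mul_nonneg (mul_nonneg hc.le hA0.le) ht, hlam]
      · -- s ≤ R := t ^ (ρ₀/θ)
        set R : ℝ := t ^ (ρ₀ / θ) with hRdef
        have ht0 : (0 : ℝ) < t := by linarith
        have hsR : s ≤ R := by
          have h := Real.rpow_le_rpow (Real.rpow_nonneg hs0 θ) hcase (by positivity : (0:ℝ) ≤ 1/θ)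
          have e1 : (s ^ θ) ^ (1/θ) = s := by
            rw [← Real.rpow_mul hs0, mul_one_div, div_self hθ₁.ne', Real.rpow_one]
          have e2 : (t ^ ρ₀) ^ (1/θ) = t ^ (ρ₀ / θ) := by
            rw [← Real.rpow_mul ht, mul_one_div]
          rwa [e1, e2] at h
        have hR1 : (1 : ℝ) ≤ R := Real.one_le_rpow h1.le (by positivity)
        have h2R : 1 + s ^ 2 ≤ 2 * R ^ 2 := by nlinarith
        have hpow : (2 * R ^ 2) ^ (ϱ / 2) ≤ (1 + s ^ 2) ^ (ϱ / 2) :=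
          Real.rpow_le_rpow_of_nonpos (by positivity) h2R (by linarith)
        have hcalc : (2 * R ^ 2) ^ (ϱ / 2) * t = (2 : ℝ) ^ (ϱ / 2) * t ^ ρ₀ := by
          have hR0 : (0 : ℝ) ≤ R := by linarith
          have he : ρ₀ / θ * 2 * (ϱ / 2) + 1 = ρ₀ := by
            rw [hρ₀]; field_simp; ring
          have hRe : (R ^ 2) ^ (ϱ / 2) = t ^ (ρ₀ / θ * 2 * (ϱ / 2)) := by
            rw [hRdef, ← Real.rpow_natCast (t ^ (ρ₀ / θ)) 2, ← Real.rpow_mul ht,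
              ← Real.rpow_mul ht]
            norm_num
          rw [Real.mul_rpow (by norm_num) (by positivity), hRe, mul_assoc,
            ← Real.rpow_add_one ht0.ne', he]
        have hAt : c * (2 : ℝ) ^ (ϱ / 2) * t ^ ρ₀ ≤ c * (1 + s ^ 2) ^ (ϱ / 2) * t := by
          have := mul_le_mul_of_nonneg_right hpow ht
          rw [hcalc] at this
          nlinarith
        have hmin : lam ≤ c * (2 : ℝ) ^ (ϱ / 2) := min_le_right _ _
        have htp : (0:ℝ) ≤ t ^ ρ₀ := Real.rpow_nonneg ht _
        have := mul_le_mul_of_nonneg_right hmin htp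
        linarith
  rw [← Real.exp_add, ← Real.exp_add, Real.exp_le_exp]
  linarith
end

section
/- Let −3 < ϱ < 0, 0 < θ ≤ 2, q > 0, 0 < ϑ < −θ/ϱ and c > 0, and set ρ₁ = (θ + ϑϱ)/(θ − ϱ), so 0 < ρ₁ < 1. Define ν̃(v,t) = c(1+|v|²)^{ϱ/2} + ϑ q |v|^θ/(8(1+t)^{ϑ+1}). Then there exist λ₂ > 0 and C ≥ 1 such that for all v ∈ ℝ³ and all 0 ≤ s ≤ t: exp(−∫ₛᵗ ν̃(v,τ) dτ) ≤ C · exp(−λ₂ (t^{ρ₁} − s^{ρ₁})). -/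
open Real Set intervalIntegral

private lemma rpow_one_add_le {s p : ℝ} (hs : 0 ≤ s) (hp : 0 ≤ p) (hp1 : p ≤ 1) :
    (1 + s) ^ p ≤ 1 + s ^ p := by
  have h := NNReal.rpow_add_le_add_rpow 1 (Real.toNNReal s) hp hp1
  have h2 := NNReal.coe_le_coe.2 h
  push_cast [NNReal.coe_rpow] at h2
  simpa [Real.coe_toNNReal s hs] using h2

set_option maxHeartbeats 1000000 in
/-- Decay of the semigroup generated by the modified collision frequency:
with `ν̃(v,t) = c(1+|v|²)^{ϱ/2} + ϑ q |v|^θ/(8(1+t)^{ϑ+1})` and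
`ρ₁ = (θ + ϑϱ)/(θ - ϱ)`, there are `λ₂ > 0` and `C ≥ 1` such that
`exp(-∫ₛᵗ ν̃(v,τ) dτ) ≤ C exp(-λ₂(t^{ρ₁} - s^{ρ₁}))` for `0 ≤ s ≤ t`. -/
theorem modified_collision_frequency_semigroup_decay
    (ϱ θ q ϑ c ρ₁ : ℝ) (hϱ₁ : -3 < ϱ) (hϱ₂ : ϱ < 0) (hθ₁ : 0 < θ) (hθ₂ : θ ≤ 2)
    (hq : 0 < q) (hϑ₁ : 0 < ϑ) (hϑ₂ : ϑ < -θ / ϱ) (hc : 0 < c)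
    (hρ₁ : ρ₁ = (θ + ϑ * ϱ) / (θ - ϱ)) :
    0 < ρ₁ ∧ ρ₁ < 1 ∧
    ∃ lam₂ C : ℝ, 0 < lam₂ ∧ 1 ≤ C ∧
      ∀ v : EuclideanSpace ℝ (Fin 3), ∀ s t : ℝ, 0 ≤ s → s ≤ t →
        Real.exp (-(∫ τ in s..t,
            (c * (1 + ‖v‖ ^ 2) ^ (ϱ / 2) + ϑ * q * ‖v‖ ^ θ / (8 * (1 + τ) ^ (ϑ + 1))))) ≤
          C * Real.exp (-(lam₂ * (t ^ ρ₁ - s ^ ρ₁))) := by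
  have hθϱ : 0 < θ - ϱ := by linarith
  have hϱne : ϱ ≠ 0 := ne_of_lt hϱ₂
  have hnum : 0 < θ + ϑ * ϱ := by
    have h1 : ϑ * (-ϱ) < (-θ / ϱ) * (-ϱ) := mul_lt_mul_of_pos_right hϑ₂ (by linarith)
    have h2 : (-θ / ϱ) * (-ϱ) = θ := by field_simp
    nlinarith
  have hρpos : 0 < ρ₁ := hρ₁ ▸ div_pos hnum hθϱ
  have hρlt : ρ₁ < 1 := by
    rw [hρ₁, div_lt_one hθϱ]
    nlinarith [mul_neg_of_neg_of_pos hϱ₂ (by linarith : (0:ℝ) < ϑ + 1)]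
  refine ⟨hρpos, hρlt, ?_⟩
  set lam : ℝ := min (c * (2:ℝ) ^ (ϱ/2)) (ϑ * q / 8) with hlam
  have hlampos : 0 < lam := lt_min (by positivity) (by positivity)
  set lam₂ : ℝ := lam / ρ₁ with hlam₂
  have hlam₂pos : 0 < lam₂ := div_pos hlampos hρpos
  refine ⟨lam₂, Real.exp lam₂, hlam₂pos, Real.one_le_exp hlam₂pos.le, ?_⟩
  have hexp : (ϑ+1)/(θ-ϱ) * ϱ = ρ₁ - 1 := by
    rw [hρ₁]; field_simp; ring
  -- pointwise lower bound
  have key : ∀ r τ : ℝ, 0 ≤ r → 0 ≤ τ →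
      lam * (1+τ) ^ (ρ₁-1) ≤ c * (1 + r^2) ^ (ϱ/2) + ϑ * q * r ^ θ / (8 * (1+τ) ^ (ϑ+1)) := by
    intro r τ hr hτ
    have h1τ : (1:ℝ) ≤ 1 + τ := by linarith
    have h0τ : (0:ℝ) < 1 + τ := by linarith
    set R : ℝ := (1+τ) ^ ((ϑ+1)/(θ-ϱ)) with hRdef
    have hR1 : 1 ≤ R := Real.one_le_rpow h1τ (by positivity)
    have hR0 : 0 < R := lt_of_lt_of_le one_pos hR1
    have hRpow : R ^ ϱ = (1+τ) ^ (ρ₁-1) := by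
      rw [hRdef, ← Real.rpow_mul h0τ.le, hexp]
    rcases le_total r R with hcase | hcase
    · have hpos2 : 0 ≤ ϑ * q * r ^ θ / (8 * (1+τ) ^ (ϑ+1)) := by positivity
      have hle : (1:ℝ) + r^2 ≤ 2 * R^2 := by nlinarith
      have h1 : (2 * R^2 : ℝ) ^ (ϱ/2) ≤ (1 + r^2) ^ (ϱ/2) :=
        Real.rpow_le_rpow_of_nonpos (by positivity) hle (by linarith)
      have h2 : (2 * R^2 : ℝ) ^ (ϱ/2) = 2 ^ (ϱ/2) * R ^ ϱ := by
        rw [Real.mul_rpow (by norm_num) (by positivity), ← Real.rpow_natCast R 2,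
          ← Real.rpow_mul hR0.le, show ((2:ℕ):ℝ) * (ϱ/2) = ϱ by push_cast; ring]
      have : lam * (1+τ) ^ (ρ₁-1) ≤ c * 2 ^ (ϱ/2) * R ^ ϱ := by
        rw [hRpow] at *
        have := min_le_left (c * (2:ℝ) ^ (ϱ/2)) (ϑ * q / 8)
        have hRp : (0:ℝ) < (1+τ) ^ (ρ₁-1) := by positivity
        nlinarith
      calc lam * (1+τ) ^ (ρ₁-1) ≤ c * 2 ^ (ϱ/2) * R ^ ϱ := this
        _ = c * (2 ^ (ϱ/2) * R ^ ϱ) := by ring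
        _ = c * ((2 * R^2) ^ (ϱ/2)) := by rw [h2]
        _ ≤ c * (1 + r^2) ^ (ϱ/2) := by
            exact mul_le_mul_of_nonneg_left h1 hc.le
        _ ≤ _ := by linarith
    · have hpos1 : 0 ≤ c * (1 + r^2) ^ (ϱ/2) := by positivity
      have hrθ : R ^ θ ≤ r ^ θ := Real.rpow_le_rpow hR0.le hcase hθ₁.le
      have hRθ : R ^ θ / (1+τ) ^ (ϑ+1) = (1+τ) ^ (ρ₁-1) := by
        rw [hRdef, ← Real.rpow_mul h0τ.le, ← Real.rpow_sub h0τ]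
        congr 1
        rw [hρ₁]; field_simp; ring
      have hden : (0:ℝ) < (1+τ) ^ (ϑ+1) := by positivity
      have h3 : lam * (1+τ) ^ (ρ₁-1) ≤ ϑ * q / 8 * (1+τ) ^ (ρ₁-1) := by
        have := min_le_right (c * (2:ℝ) ^ (ϱ/2)) (ϑ * q / 8)
        have hRp : (0:ℝ) < (1+τ) ^ (ρ₁-1) := by positivity
        nlinarith
      have h4 : ϑ * q / 8 * (1+τ) ^ (ρ₁-1) ≤ ϑ * q * r ^ θ / (8 * (1+τ) ^ (ϑ+1)) := by
        rw [← hRθ, show ϑ * q * r ^ θ / (8 * (1+τ) ^ (ϑ+1))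
            = ϑ * q / 8 * (r ^ θ / (1+τ) ^ (ϑ+1)) from by field_simp]
        gcongr
      linarith
  intro v s t hs hst
  set r : ℝ := ‖v‖ with hr
  have hr0 : 0 ≤ r := norm_nonneg _
  set f : ℝ → ℝ := fun τ => c * (1 + r^2) ^ (ϱ/2) + ϑ * q * r ^ θ / (8 * (1+τ) ^ (ϑ+1)) with hf
  set g : ℝ → ℝ := fun τ => lam * (1+τ) ^ (ρ₁-1) with hg
  have huIcc : uIcc s t = Icc s t := uIcc_of_le hst
  have hmem : ∀ x ∈ Icc s t, (0:ℝ) < 1 + x := fun x hx => by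
    have := hx.1; linarith
  have hfc : ContinuousOn f (uIcc s t) := by
    rw [huIcc]
    apply ContinuousOn.add continuousOn_const
    apply ContinuousOn.div continuousOn_const
    · exact continuousOn_const.mul
        ((continuousOn_const.add continuousOn_id).rpow_const
          (fun x hx => Or.inl (ne_of_gt (hmem x hx))))
    · intro x hx
      have := hmem x hx
      positivity
  have hgc : ContinuousOn g (uIcc s t) := by
    rw [huIcc]
    exact continuousOn_const.mul
      ((continuousOn_const.add continuousOn_id).rpow_const
        (fun x hx => Or.inl (ne_of_gt (hmem x hx))))
  have hfint : IntervalIntegrable f MeasureTheory.volume s t := hfc.intervalIntegrable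
  have hgint : IntervalIntegrable g MeasureTheory.volume s t := hgc.intervalIntegrable
  -- integral of g
  have hFTC : ∫ τ in s..t, g τ = lam / ρ₁ * (1+t) ^ ρ₁ - lam / ρ₁ * (1+s) ^ ρ₁ := by
    have := intervalIntegral.integral_eq_sub_of_hasDerivAt
      (f := fun τ => lam / ρ₁ * (1+τ) ^ ρ₁) (f' := g) (a := s) (b := t)
      (fun x hx => by
        rw [huIcc] at hx
        have hx0 : (0:ℝ) < 1 + x := hmem x hx
        have h1 : HasDerivAt (fun τ : ℝ => (1+τ) ^ ρ₁) (ρ₁ * (1+x) ^ (ρ₁-1) * 1) x := by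
          exact (Real.hasDerivAt_rpow_const (Or.inl (ne_of_gt hx0))).comp x
            ((hasDerivAt_id x).const_add 1)
        have h2 := h1.const_mul (lam / ρ₁)
        have heq : lam / ρ₁ * (ρ₁ * (1+x) ^ (ρ₁-1) * 1) = g x := by
          simp only [hg]
          rw [mul_one]
          field_simp
        exact heq ▸ h2) hgint
    rw [this]
  -- compare integrals
  have hmono : ∫ τ in s..t, g τ ≤ ∫ τ in s..t, f τ := by
    apply intervalIntegral.integral_mono_on hst hgint hfint
    intro x hx
    exact key r x hr0 (le_trans hs hx.1)
  have ht0 : 0 ≤ t := le_trans hs hst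
  have h5 : t ^ ρ₁ ≤ (1+t) ^ ρ₁ := Real.rpow_le_rpow ht0 (by linarith) hρpos.le
  have h6 : (1+s) ^ ρ₁ ≤ 1 + s ^ ρ₁ := rpow_one_add_le hs hρpos.le hρlt.le
  have h7 : lam₂ * (t ^ ρ₁ - s ^ ρ₁) - lam₂ ≤ ∫ τ in s..t, f τ := by
    rw [hFTC] at hmono
    have hll : 0 < lam / ρ₁ := hlam₂pos
    nlinarith [mul_le_mul_of_nonneg_left h5 hll.le, mul_le_mul_of_nonneg_left h6 hll.le]
  calc Real.exp (-(∫ τ in s..t, f τ)) ≤ Real.exp (-(lam₂ * (t ^ ρ₁ - s ^ ρ₁) - lam₂)) :=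
        Real.exp_le_exp.2 (by linarith)
    _ = Real.exp lam₂ * Real.exp (-(lam₂ * (t ^ ρ₁ - s ^ ρ₁))) := by
        rw [← Real.exp_add]; ring_nf
end

section
/- Let 0 < q̃ < s₀ < 1. Then there exist ε₀ > 0 and C > 0 such that for all 0 ≤ ε ≤ ε₀, all v ∈ ℝ³ and all η ∈ ℝ³ with η ≠ 0: −((s₀−8ε)/8)|η|² − ((s₀−8ε)/8)·(|η|² − 2 v·η)²/|η|² − (q̃/4)(|η|² − 2 v·η) ≤ −C(|η|²/2 + |v·η|). (Negative definiteness of the perturbed quadratic form in |η| and (v·η)/|η| appearing in the weighted kernel estimate for θ = 2.) -/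
lemma aux_quad (q s C A B : ℝ) (hq : 0 < q) (hA : 0 < A)
    (hs1 : q + 10 * C ≤ s) (hC0 : 0 < C) (hC2 : 8 * C ≤ q) :
    -(s/8) * A^2 - (s/8) * (A - 2*B)^2 - (q/4) * (A - 2*B) * A
      + C * (A/2 + |B|) * A ≤ 0 := by
  rcases le_total B 0 with hB | hB
  · rw [abs_of_nonpos hB]
    nlinarith [sq_nonneg (A - 2*B), mul_nonneg hA.le (neg_nonneg.mpr hB),
      mul_pos hA hA, sq_nonneg A]
  · rw [abs_of_nonneg hB]
    nlinarith [sq_nonneg (A - B), sq_nonneg (A - 2*B), mul_pos hA hA,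
      mul_nonneg hA.le hB, sq_nonneg B]

/-- Negative definiteness of the perturbed quadratic form (case `θ = 2`):
for `0 < q̃ < s₀ < 1` there are `ε₀ > 0` and `C > 0` such that for `0 ≤ ε ≤ ε₀`,
all `v` and all `η ≠ 0`,
`-((s₀-8ε)/8)|η|² - ((s₀-8ε)/8)(|η|² - 2v·η)²/|η|² - (q̃/4)(|η|² - 2v·η)
  ≤ -C(|η|²/2 + |v·η|)`. -/
theorem perturbed_quadratic_form_neg_def
    (qt s₀ : ℝ) (hq₁ : 0 < qt) (hq₂ : qt < s₀) (hs₀ : s₀ < 1) :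
    ∃ ε₀ C : ℝ, 0 < ε₀ ∧ 0 < C ∧
      ∀ ε : ℝ, 0 ≤ ε → ε ≤ ε₀ →
        ∀ v η : EuclideanSpace ℝ (Fin 3), η ≠ 0 →
          -((s₀ - 8 * ε) / 8) * ‖η‖ ^ 2
            - ((s₀ - 8 * ε) / 8) * (‖η‖ ^ 2 - 2 * (inner ℝ v η : ℝ)) ^ 2 / ‖η‖ ^ 2
            - (qt / 4) * (‖η‖ ^ 2 - 2 * (inner ℝ v η : ℝ)) ≤
          -C * (‖η‖ ^ 2 / 2 + |(inner ℝ v η : ℝ)|) := by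
  refine ⟨(s₀ - qt) / 16, min (qt / 8) ((s₀ - qt) / 20), by linarith, ?_, ?_⟩
  · exact lt_min (by linarith) (by linarith)
  · intro ε hε0 hε1 v η hη
    set C : ℝ := min (qt / 8) ((s₀ - qt) / 20) with hC
    have hA : (0:ℝ) < ‖η‖ ^ 2 := pow_pos (norm_pos_iff.mpr hη) 2
    set A : ℝ := ‖η‖ ^ 2
    set B : ℝ := (inner ℝ v η : ℝ)
    have hC0 : 0 < C := lt_min (by linarith) (by linarith)
    have hC2 : 8 * C ≤ qt := by
      have := min_le_left (qt / 8) ((s₀ - qt) / 20); linarith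
    have hs1 : qt + 10 * C ≤ s₀ - 8 * ε := by
      have := min_le_right (qt / 8) ((s₀ - qt) / 20); linarith
    have hN := aux_quad qt (s₀ - 8 * ε) C A B hq₁ hA hs1 hC0 hC2
    rw [← sub_nonpos]
    have e : -((s₀ - 8 * ε) / 8) * A - ((s₀ - 8 * ε) / 8) * (A - 2 * B) ^ 2 / A
        - (qt / 4) * (A - 2 * B) - (-C * (A / 2 + |B|)) =
        (-((s₀ - 8 * ε)/8) * A^2 - ((s₀ - 8 * ε)/8) * (A - 2*B)^2
          - (qt/4) * (A - 2*B) * A + C * (A/2 + |B|) * A) / A := by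
      field_simp
      ring
    rw [e]
    exact div_nonpos_of_nonpos_of_nonneg hN hA.le
end

section
/- Let 0 < θ < 2, 0 < s₀ < 1 and A > 0. Then there exist ε₀ > 0, C > 0 and C′ > 0 such that for all 0 ≤ ε ≤ ε₀, all v ∈ ℝ³ and all η ∈ ℝ³ with η ≠ 0: −((s₀−8ε)/8)|η|² − (s₀/8)·(|η|² − 2 v·η)²/|η|² + A|η|^θ ≤ −C(|η|²/2 + |v·η|) + C′. (Negative definiteness, up to an additive constant, of the perturbed quadratic form appearing in the weighted kernel estimate for 0 < θ < 2.) -/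
private lemma pqf_aux (θ s₀ A : ℝ) (hθ₁ : 0 < θ) (hθ₂ : θ < 2) (hs₁ : 0 < s₀) (hA : 0 < A)
    (ε r t : ℝ) (hε : 0 ≤ ε) (hε' : ε ≤ s₀ / 32) (hr : 0 < r) :
    -((s₀ - 8 * ε) / 8) * r ^ 2 - (s₀ / 8) * (r ^ 2 - 2 * t) ^ 2 / r ^ 2 + A * r ^ θ
      ≤ -(s₀ / 32) * (r ^ 2 / 2 + |t|)
        + A * (max 1 ((s₀ / (32 * A)) ^ ((θ - 2)⁻¹)) : ℝ) ^ θ := by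
  set δ : ℝ := s₀ / (32 * A) with hδ
  have hδpos : 0 < δ := by positivity
  set R : ℝ := max 1 (δ ^ ((θ - 2)⁻¹)) with hRdef
  have hR1 : (1 : ℝ) ≤ R := le_max_left _ _
  have hRpos : 0 < R := lt_of_lt_of_le one_pos hR1
  -- Step 1 : A * r^θ ≤ (s₀/32) * r^2 + A * R^θ
  have step1 : A * r ^ θ ≤ s₀ / 32 * r ^ 2 + A * R ^ θ := by
    rcases le_or_gt r R with h | h
    · have h1 : r ^ θ ≤ R ^ θ := Real.rpow_le_rpow hr.le h hθ₁.le
      have h2 : A * r ^ θ ≤ A * R ^ θ := by nlinarith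
      nlinarith [sq_nonneg r, hs₁]
    · have hsub : θ - 2 ≤ 0 := by linarith
      have h2 : r ^ (θ - 2) ≤ R ^ (θ - 2) :=
        Real.rpow_le_rpow_of_nonpos hRpos h.le hsub
      have h3 : R ^ (θ - 2) ≤ δ := by
        have hle : δ ^ ((θ - 2)⁻¹) ≤ R := le_max_right _ _
        have hδR : R ^ (θ - 2) ≤ (δ ^ ((θ - 2)⁻¹)) ^ (θ - 2) :=
          Real.rpow_le_rpow_of_nonpos (Real.rpow_pos_of_pos hδpos _) hle hsub
        have hne : θ - 2 ≠ 0 := by linarith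
        have : (δ ^ ((θ - 2)⁻¹)) ^ (θ - 2) = δ := by
          rw [← Real.rpow_mul hδpos.le, inv_mul_cancel₀ hne, Real.rpow_one]
        linarith [hδR, this.le]
      have hsplit : r ^ θ = r ^ (θ - 2) * r ^ 2 := by
        rw [← Real.rpow_natCast r 2, ← Real.rpow_add hr]
        norm_num
      have h4 : r ^ (θ - 2) ≤ δ := le_trans h2 h3
      have hrpow_pos : 0 < r ^ (θ - 2) := Real.rpow_pos_of_pos hr _
      have hAδ : A * δ = s₀ / 32 := by
        field_simp [hδ]
        rw [hδ]; field_simp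
      have h5 : A * r ^ θ ≤ s₀ / 32 * r ^ 2 := by
        rw [hsplit, ← hAδ]
        have hr2 : (0 : ℝ) ≤ r ^ 2 := sq_nonneg r
        have := mul_le_mul_of_nonneg_right (mul_le_mul_of_nonneg_left h4 hA.le) hr2
        linarith
      have h6 : 0 < A * R ^ θ := by positivity
      linarith
  -- Step 2 : the quadratic part
  have hr2 : (0 : ℝ) < r ^ 2 := by positivity
  have hq' : (r ^ 2 - 2 * t) ^ 2 / r ^ 2 * r ^ 2 = (r ^ 2 - 2 * t) ^ 2 :=
    div_mul_cancel₀ _ (ne_of_gt hr2)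
  have hqnn : 0 ≤ (r ^ 2 - 2 * t) ^ 2 / r ^ 2 := by positivity
  have step2 : -((s₀ - 8 * ε) / 8) * r ^ 2 - (s₀ / 8) * ((r ^ 2 - 2 * t) ^ 2 / r ^ 2)
      ≤ -(s₀ / 32) * (r ^ 2 / 2 + |t|) - s₀ / 32 * r ^ 2 := by
    have hfirst : -((s₀ - 8 * ε) / 8) * r ^ 2 ≤ -(3 * s₀ / 32) * r ^ 2 := by nlinarith
    rcases le_or_gt (|t|) (r ^ 2) with ht | ht
    · nlinarith [mul_nonneg hs₁.le hqnn]
    · -- |t| > r^2, so (r^2-2t)^2/r^2 ≥ |t|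
      have habs : |t| ≤ (r ^ 2 - 2 * t) ^ 2 / r ^ 2 := by
        rw [le_div_iff₀ hr2]
        rcases abs_cases t with ⟨h1, h2⟩ | ⟨h1, h2⟩ <;> nlinarith
      nlinarith [mul_le_mul_of_nonneg_left habs (by positivity : (0:ℝ) ≤ s₀ / 8)]
  have hrw : (s₀ / 8) * (r ^ 2 - 2 * t) ^ 2 / r ^ 2
      = (s₀ / 8) * ((r ^ 2 - 2 * t) ^ 2 / r ^ 2) := by ring
  rw [hrw]
  linarith

/-- Negative definiteness up to a constant of the perturbed quadratic form
(case `0 < θ < 2`): for `0 < θ < 2`, `0 < s₀ < 1` and `A > 0` there are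
`ε₀ > 0`, `C > 0`, `C' > 0` such that for `0 ≤ ε ≤ ε₀`, all `v` and all `η ≠ 0`,
`-((s₀-8ε)/8)|η|² - (s₀/8)(|η|² - 2v·η)²/|η|² + A|η|^θ
  ≤ -C(|η|²/2 + |v·η|) + C'`. -/
theorem perturbed_quadratic_form_neg_def_theta_lt_two
    (θ s₀ A : ℝ) (hθ₁ : 0 < θ) (hθ₂ : θ < 2) (hs₁ : 0 < s₀) (hs₂ : s₀ < 1) (hA : 0 < A) :
    ∃ ε₀ C C' : ℝ, 0 < ε₀ ∧ 0 < C ∧ 0 < C' ∧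
      ∀ ε : ℝ, 0 ≤ ε → ε ≤ ε₀ →
        ∀ v η : EuclideanSpace ℝ (Fin 3), η ≠ 0 →
          -((s₀ - 8 * ε) / 8) * ‖η‖ ^ 2
            - (s₀ / 8) * (‖η‖ ^ 2 - 2 * (inner ℝ v η : ℝ)) ^ 2 / ‖η‖ ^ 2
            + A * ‖η‖ ^ θ ≤
          -C * (‖η‖ ^ 2 / 2 + |(inner ℝ v η : ℝ)|) + C' := by
  refine ⟨s₀ / 32, s₀ / 32,
    A * (max 1 ((s₀ / (32 * A)) ^ ((θ - 2)⁻¹)) : ℝ) ^ θ,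
    by positivity, by positivity, ?_, ?_⟩
  · have h1 : (0:ℝ) < max 1 ((s₀ / (32 * A)) ^ ((θ - 2)⁻¹)) :=
      lt_of_lt_of_le one_pos (le_max_left _ _)
    positivity
  · intro ε hε hε' v η hη
    have hr : 0 < ‖η‖ := norm_pos_iff.mpr hη
    have := pqf_aux θ s₀ A hθ₁ hθ₂ hs₁ hA ε ‖η‖ (inner ℝ v η : ℝ) hε hε' hr
    linarith
end

section
/- Let −3 < ϱ < 0 and a > 0. Then there exists C > 0 such that for every v ∈ ℝ³: ∫_{ℝ³} |u − v|^ϱ e^{−a|u|²} du ≤ C(1+|v|)^ϱ. -/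
open MeasureTheory Real Set Filter
open scoped ENNReal

local notation "E3" => EuclideanSpace ℝ (Fin 3)

private lemma sp_ball_integrableOn {ϱ : ℝ} (hϱ₁ : -3 < ϱ) (hϱ₂ : ϱ < 0) :
    IntegrableOn (fun w : E3 => ‖w‖ ^ ϱ) (Metric.ball 0 1) := by
  have hmeas : Measurable (fun w : E3 => ‖w‖ ^ ϱ) := by fun_prop
  constructor
  · exact hmeas.aestronglyMeasurable
  · rw [hasFiniteIntegral_iff_ofReal (Eventually.of_forall fun w => rpow_nonneg (norm_nonneg _) _)]
    set ν := volume.restrict (Metric.ball (0 : E3) 1) with hν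
    rw [lintegral_eq_lintegral_meas_le ν
      (Eventually.of_forall fun w => rpow_nonneg (norm_nonneg _) _) hmeas.aemeasurable]
    have hsub : ∀ t : ℝ, 0 < t →
        {a : E3 | t ≤ ‖a‖ ^ ϱ} ⊆ Metric.closedBall 0 (t ^ ϱ⁻¹) := by
      intro t ht a ha
      simp only [mem_setOf_eq] at ha
      rw [Metric.mem_closedBall, dist_zero_right]
      have hna : 0 < ‖a‖ := by
        rcases eq_or_lt_of_le (norm_nonneg a) with h | h
        · exfalso; rw [← h, zero_rpow hϱ₂.ne] at ha; linarith
        · exact h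
      have h2 := rpow_le_rpow_of_nonpos ht ha (inv_nonpos.mpr hϱ₂.le)
      rwa [← rpow_mul hna.le, mul_inv_cancel₀ hϱ₂.ne, rpow_one] at h2
    have hexp : ϱ⁻¹ * 3 < -1 := by
      rw [inv_mul_eq_div, div_lt_iff_of_neg hϱ₂]
      linarith
    calc ∫⁻ t in Ioi (0:ℝ), ν {a : E3 | t ≤ ‖a‖ ^ ϱ}
        ≤ ∫⁻ t in Ioc (0:ℝ) 1 ∪ Ioi 1, ν {a : E3 | t ≤ ‖a‖ ^ ϱ} :=
          lintegral_mono_set Ioi_subset_Ioc_union_Ioi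
      _ ≤ (∫⁻ t in Ioc (0:ℝ) 1, ν {a : E3 | t ≤ ‖a‖ ^ ϱ})
            + ∫⁻ t in Ioi (1:ℝ), ν {a : E3 | t ≤ ‖a‖ ^ ϱ} := lintegral_union_le _ _ _
      _ < ∞ := by
          refine ENNReal.add_lt_top.2 ⟨?_, ?_⟩
          · calc ∫⁻ t in Ioc (0:ℝ) 1, ν {a : E3 | t ≤ ‖a‖ ^ ϱ}
                ≤ ∫⁻ _t in Ioc (0:ℝ) 1, volume (Metric.ball (0 : E3) 1) := by
                  refine lintegral_mono fun t => ?_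
                  calc ν {a : E3 | t ≤ ‖a‖ ^ ϱ} ≤ ν univ := measure_mono (subset_univ _)
                    _ = volume (Metric.ball (0 : E3) 1) := by
                        rw [hν, Measure.restrict_apply_univ]
              _ < ∞ := by
                  rw [setLIntegral_const]
                  exact ENNReal.mul_lt_top measure_ball_lt_top (by simp)
          · have hbd : ∀ t ∈ Ioi (1:ℝ), ν {a : E3 | t ≤ ‖a‖ ^ ϱ}
                ≤ ENNReal.ofReal (t ^ (ϱ⁻¹ * 3)) * volume (Metric.ball (0 : E3) 1) := by
              intro t ht
              have ht0 : (0:ℝ) < t := lt_trans one_pos ht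
              calc ν {a : E3 | t ≤ ‖a‖ ^ ϱ}
                  ≤ volume {a : E3 | t ≤ ‖a‖ ^ ϱ} := Measure.restrict_le_self _
                _ ≤ volume (Metric.closedBall (0:E3) (t ^ ϱ⁻¹)) :=
                    measure_mono (hsub t ht0)
                _ = ENNReal.ofReal ((t ^ ϱ⁻¹) ^ Module.finrank ℝ E3)
                      * volume (Metric.ball (0:E3) 1) :=
                    Measure.addHaar_closedBall _ _ (rpow_nonneg ht0.le _)
                _ = ENNReal.ofReal (t ^ (ϱ⁻¹ * 3)) * volume (Metric.ball (0:E3) 1) := by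
                    rw [show Module.finrank ℝ E3 = 3 from finrank_euclideanSpace_fin,
                      ← rpow_natCast (t ^ ϱ⁻¹) 3, ← rpow_mul ht0.le]
                    norm_num
            calc ∫⁻ t in Ioi (1:ℝ), ν {a : E3 | t ≤ ‖a‖ ^ ϱ}
                ≤ ∫⁻ t in Ioi (1:ℝ),
                    ENNReal.ofReal (t ^ (ϱ⁻¹ * 3)) * volume (Metric.ball (0:E3) 1) :=
                  setLIntegral_mono' measurableSet_Ioi hbd
              _ < ∞ := by
                  rw [lintegral_mul_const' _ _ measure_ball_lt_top.ne]
                  exact ENNReal.mul_lt_top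
                    ((integrableOn_Ioi_rpow_of_lt hexp one_pos).setLIntegral_lt_top)
                    measure_ball_lt_top

private lemma sp_gauss_integrable {b : ℝ} (hb : 0 < b) :
    Integrable (fun u : E3 => Real.exp (-b * ‖u‖ ^ 2)) := by
  have h := (GaussianFourier.integrable_cexp_neg_mul_sq_norm_add (V := E3)
    (b := (b : ℂ)) (by simpa using hb) 0 0).norm
  refine h.congr ?_
  refine Eventually.of_forall fun u => ?_
  simp [Complex.norm_exp, ← Complex.ofReal_pow]

private lemma sp_dom {ϱ : ℝ} (hϱ₂ : ϱ < 0) (b : ℝ) (hb : 0 < b) (v u : E3) :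
    ‖u - v‖ ^ ϱ * Real.exp (-b * ‖u‖ ^ 2) ≤
      (Metric.ball (0:E3) 1).indicator (fun w => ‖w‖ ^ ϱ) (u - v)
        + Real.exp (-b * ‖u‖ ^ 2) := by
  have hexp1 : Real.exp (-b * ‖u‖ ^ 2) ≤ 1 := by
    rw [Real.exp_le_one_iff]
    nlinarith [sq_nonneg ‖u‖, norm_nonneg u]
  by_cases h : ‖u - v‖ < 1
  · have hm : u - v ∈ Metric.ball (0:E3) 1 := by rwa [mem_ball_zero_iff]
    rw [indicator_of_mem hm]
    have h0 : ‖u - v‖ ^ ϱ * Real.exp (-b * ‖u‖ ^ 2) ≤ ‖u - v‖ ^ ϱ * 1 := by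
      gcongr
    calc ‖u - v‖ ^ ϱ * Real.exp (-b * ‖u‖ ^ 2) ≤ ‖u - v‖ ^ ϱ * 1 := h0
      _ = ‖u - v‖ ^ ϱ := mul_one _
      _ ≤ _ := le_add_of_nonneg_right (Real.exp_pos _).le
  · push_neg at h
    have h1 : ‖u - v‖ ^ ϱ ≤ 1 := rpow_le_one_of_one_le_of_nonpos h hϱ₂.le
    calc ‖u - v‖ ^ ϱ * Real.exp (-b * ‖u‖ ^ 2) ≤ 1 * Real.exp (-b * ‖u‖ ^ 2) := by
          gcongr
      _ = Real.exp (-b * ‖u‖ ^ 2) := one_mul _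
      _ ≤ _ := le_add_of_nonneg_left (indicator_nonneg
          (fun w _ => rpow_nonneg (norm_nonneg _) _) _)

private lemma sp_exp_bound {ϱ a : ℝ} (hϱ₁ : -3 < ϱ) (ha : 0 < a) {t : ℝ} (ht : 0 ≤ t) :
    Real.exp (-(a/8) * t ^ 2) ≤ Real.exp (18/a) * (1 + t) ^ ϱ := by
  have h1t : (0:ℝ) < 1 + t := by linarith
  have h1 : (1+t) ^ (-ϱ) ≤ (1+t) ^ (3:ℝ) :=
    rpow_le_rpow_of_exponent_le (by linarith) (by linarith)
  have h2 : (1+t) ^ (3:ℝ) ≤ Real.exp (3*t) := by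
    calc (1+t) ^ (3:ℝ) ≤ (Real.exp t) ^ (3:ℝ) :=
          rpow_le_rpow h1t.le (by linarith [Real.add_one_le_exp t]) (by norm_num)
      _ = Real.exp (t*3) := (Real.exp_mul t 3).symm
      _ = Real.exp (3*t) := by rw [mul_comm]
  have h3 : Real.exp (-(a/8) * t ^ 2) * (1+t) ^ (-ϱ) ≤ Real.exp (18/a) := by
    calc Real.exp (-(a/8) * t ^ 2) * (1+t) ^ (-ϱ)
        ≤ Real.exp (-(a/8) * t ^ 2) * Real.exp (3*t) := by
          apply mul_le_mul_of_nonneg_left (h1.trans h2) (Real.exp_pos _).le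
      _ = Real.exp (3*t + -(a/8) * t ^ 2) := by rw [← Real.exp_add, add_comm]
      _ ≤ Real.exp (18/a) := by
          apply Real.exp_le_exp.mpr
          rw [← sub_nonneg]
          have key : 0 ≤ (18/a - (3*t + -(a/8) * t ^ 2)) * a := by
            rw [sub_mul, div_mul_cancel₀ _ ha.ne']
            nlinarith [sq_nonneg (a*t - 12)]
          exact nonneg_of_mul_nonneg_right
            (by linarith [key] : 0 ≤ a * (18/a - (3*t + -(a/8) * t ^ 2))) ha
  have hp : (0:ℝ) < (1+t) ^ ϱ := rpow_pos_of_pos h1t _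
  have h4 := mul_le_mul_of_nonneg_right h3 hp.le
  rwa [mul_assoc, ← rpow_add h1t, neg_add_cancel, rpow_zero, mul_one] at h4

/-- Convolution bound for the soft potential: for `-3 < ϱ < 0` and `a > 0` there is
`C > 0` such that `∫ |u - v|^ϱ e^{-a|u|²} du ≤ C (1+|v|)^ϱ` for every `v ∈ ℝ³`. -/
theorem soft_potential_gaussian_convolution_bound
    (ϱ a : ℝ) (hϱ₁ : -3 < ϱ) (hϱ₂ : ϱ < 0) (ha : 0 < a) :
    ∃ C : ℝ, 0 < C ∧
      ∀ v : EuclideanSpace ℝ (Fin 3),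
        (∫ u : EuclideanSpace ℝ (Fin 3), ‖u - v‖ ^ ϱ * Real.exp (-a * ‖u‖ ^ 2)) ≤
          C * (1 + ‖v‖) ^ ϱ := by
  classical
  set F : E3 → ℝ := (Metric.ball (0:E3) 1).indicator (fun w => ‖w‖ ^ ϱ) with hF
  have hFint : Integrable F :=
    (sp_ball_integrableOn hϱ₁ hϱ₂).integrable_indicator Metric.isOpen_ball.measurableSet
  have hFnonneg : ∀ w, 0 ≤ F w :=
    fun w => indicator_nonneg (fun w _ => rpow_nonneg (norm_nonneg _) _) _
  have ha2 : 0 < a/2 := by linarith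
  have hGa : Integrable (fun u : E3 => Real.exp (-a * ‖u‖ ^ 2)) := sp_gauss_integrable ha
  have hGb : Integrable (fun u : E3 => Real.exp (-(a/2) * ‖u‖ ^ 2)) := sp_gauss_integrable ha2
  set KF : ℝ := ∫ w : E3, F w with hKF
  set Ga : ℝ := ∫ u : E3, Real.exp (-a * ‖u‖ ^ 2) with hGaDef
  set Gb : ℝ := ∫ u : E3, Real.exp (-(a/2) * ‖u‖ ^ 2) with hGbDef
  have hKFpos : 0 ≤ KF := integral_nonneg hFnonneg
  have hGapos : 0 < Ga := by
    rw [hGaDef]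
    have := GaussianFourier.integral_rexp_neg_mul_sq_norm (V := E3) ha
    simp only [neg_mul] at this ⊢
    rw [this]
    positivity
  have hGbpos : 0 < Gb := by
    rw [hGbDef]
    have := GaussianFourier.integral_rexp_neg_mul_sq_norm (V := E3) ha2
    simp only [neg_mul] at this ⊢
    rw [this]
    positivity
  set K : ℝ := KF + Ga with hK
  have hKpos : 0 < K := by positivity
  set C : ℝ := K * 2 ^ (-ϱ) + Ga * 4 ^ (-ϱ) + Real.exp (18/a) * (KF + Gb) with hC
  have h2pos : (0:ℝ) < 2 ^ (-ϱ) := rpow_pos_of_pos two_pos _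
  have h4pos : (0:ℝ) < 4 ^ (-ϱ) := rpow_pos_of_pos (by norm_num) _
  refine ⟨C, by positivity, fun v => ?_⟩
  have hPpos : (0:ℝ) < (1 + ‖v‖) ^ ϱ :=
    rpow_pos_of_pos (by linarith [norm_nonneg v]) _
  -- Uniform bound: the integral is at most K for every v
  have huniform : (∫ u : E3, ‖u - v‖ ^ ϱ * Real.exp (-a * ‖u‖ ^ 2)) ≤ K := by
    have hgint : Integrable (fun u : E3 => F (u - v) + Real.exp (-a * ‖u‖ ^ 2)) :=
      (hFint.comp_sub_right v).add hGa
    have hmono := integral_mono_of_nonneg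
      (f := fun u : E3 => ‖u - v‖ ^ ϱ * Real.exp (-a * ‖u‖ ^ 2))
      (g := fun u : E3 => F (u - v) + Real.exp (-a * ‖u‖ ^ 2))
      (Eventually.of_forall fun u =>
        mul_nonneg (rpow_nonneg (norm_nonneg _) _) (Real.exp_pos _).le)
      hgint
      (Eventually.of_forall fun u => sp_dom hϱ₂ a ha v u)
    refine hmono.trans ?_
    rw [integral_add (hFint.comp_sub_right v) hGa,
      integral_sub_right_eq_self F v]
  by_cases hv : ‖v‖ ≤ 1
  · -- small v: use the uniform bound
    have h2 : (2:ℝ) ^ ϱ ≤ (1 + ‖v‖) ^ ϱ :=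
      rpow_le_rpow_of_nonpos (by linarith [norm_nonneg v]) (by linarith) hϱ₂.le
    have hKC : K * 2 ^ (-ϱ) ≤ C := by
      rw [hC]
      have : (0:ℝ) ≤ Ga * 4 ^ (-ϱ) := by positivity
      have : (0:ℝ) ≤ Real.exp (18/a) * (KF + Gb) := by positivity
      linarith [mul_nonneg hGapos.le h4pos.le,
        mul_nonneg (Real.exp_pos (18/a)).le (by linarith : (0:ℝ) ≤ KF + Gb)]
    calc (∫ u : E3, ‖u - v‖ ^ ϱ * Real.exp (-a * ‖u‖ ^ 2)) ≤ K := huniform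
      _ = K * 2 ^ (-ϱ) * 2 ^ ϱ := by
          rw [mul_assoc, ← rpow_add two_pos, neg_add_cancel, rpow_zero, mul_one]
      _ ≤ K * 2 ^ (-ϱ) * (1 + ‖v‖) ^ ϱ := by
          apply mul_le_mul_of_nonneg_left h2 (by positivity)
      _ ≤ C * (1 + ‖v‖) ^ ϱ := mul_le_mul_of_nonneg_right hKC hPpos.le
  · -- large v
    push_neg at hv
    have hv1 : (1:ℝ) ≤ ‖v‖ := hv.le
    -- pointwise domination for large v
    have hdom2 : ∀ u : E3, ‖u - v‖ ^ ϱ * Real.exp (-a * ‖u‖ ^ 2) ≤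
        (‖v‖/2) ^ ϱ * Real.exp (-a * ‖u‖ ^ 2)
          + Real.exp (-(a/8) * ‖v‖ ^ 2) * (F (u - v) + Real.exp (-(a/2) * ‖u‖ ^ 2)) := by
      intro u
      have hsecond : (0:ℝ) ≤ Real.exp (-(a/8) * ‖v‖ ^ 2)
          * (F (u - v) + Real.exp (-(a/2) * ‖u‖ ^ 2)) :=
        mul_nonneg (Real.exp_pos _).le (add_nonneg (hFnonneg _) (Real.exp_pos _).le)
      by_cases h : ‖u‖ ≤ ‖v‖/2
      · have hd : ‖v‖/2 ≤ ‖u - v‖ := by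
          have h1 := norm_sub_norm_le v u
          rw [norm_sub_rev v u] at h1
          linarith
        have h1 : ‖u - v‖ ^ ϱ ≤ (‖v‖/2) ^ ϱ :=
          rpow_le_rpow_of_nonpos (by linarith) hd hϱ₂.le
        have := mul_le_mul_of_nonneg_right h1 (Real.exp_pos (-a * ‖u‖ ^ 2)).le
        linarith
      · push_neg at h
        have hsq : (‖v‖/2) ^ 2 ≤ ‖u‖ ^ 2 := by nlinarith [norm_nonneg u, norm_nonneg v]
        have key : Real.exp (-a * ‖u‖ ^ 2) ≤
            Real.exp (-(a/8) * ‖v‖ ^ 2) * Real.exp (-(a/2) * ‖u‖ ^ 2) := by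
          rw [← Real.exp_add]
          apply Real.exp_le_exp.mpr
          nlinarith [mul_le_mul_of_nonneg_left hsq (by linarith : (0:ℝ) ≤ a/2)]
        have hstep : ‖u - v‖ ^ ϱ * Real.exp (-a * ‖u‖ ^ 2) ≤
            Real.exp (-(a/8) * ‖v‖ ^ 2) * (‖u - v‖ ^ ϱ * Real.exp (-(a/2) * ‖u‖ ^ 2)) := by
          calc ‖u - v‖ ^ ϱ * Real.exp (-a * ‖u‖ ^ 2)
              ≤ ‖u - v‖ ^ ϱ * (Real.exp (-(a/8) * ‖v‖ ^ 2) * Real.exp (-(a/2) * ‖u‖ ^ 2)) :=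
                mul_le_mul_of_nonneg_left key (rpow_nonneg (norm_nonneg _) _)
            _ = Real.exp (-(a/8) * ‖v‖ ^ 2) * (‖u - v‖ ^ ϱ * Real.exp (-(a/2) * ‖u‖ ^ 2)) := by
                ring
        have hstep2 : Real.exp (-(a/8) * ‖v‖ ^ 2) * (‖u - v‖ ^ ϱ * Real.exp (-(a/2) * ‖u‖ ^ 2))
            ≤ Real.exp (-(a/8) * ‖v‖ ^ 2) * (F (u - v) + Real.exp (-(a/2) * ‖u‖ ^ 2)) :=
          mul_le_mul_of_nonneg_left (sp_dom hϱ₂ (a/2) ha2 v u) (Real.exp_pos _).le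
        have hfirst : (0:ℝ) ≤ (‖v‖/2) ^ ϱ * Real.exp (-a * ‖u‖ ^ 2) :=
          mul_nonneg (rpow_nonneg (by positivity) _) (Real.exp_pos _).le
        linarith
    -- integrate the domination
    have hsum : Integrable (fun u : E3 => F (u - v) + Real.exp (-(a/2) * ‖u‖ ^ 2)) :=
      (hFint.comp_sub_right v).add hGb
    have hterm1 : Integrable (fun u : E3 => (‖v‖/2) ^ ϱ * Real.exp (-a * ‖u‖ ^ 2)) :=
      hGa.const_mul _
    have hterm2 : Integrable (fun u : E3 =>
        Real.exp (-(a/8) * ‖v‖ ^ 2) * (F (u - v) + Real.exp (-(a/2) * ‖u‖ ^ 2))) :=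
      hsum.const_mul _
    have hg2int : Integrable (fun u : E3 =>
        (‖v‖/2) ^ ϱ * Real.exp (-a * ‖u‖ ^ 2)
          + Real.exp (-(a/8) * ‖v‖ ^ 2) * (F (u - v) + Real.exp (-(a/2) * ‖u‖ ^ 2))) :=
      hterm1.add hterm2
    have hIle := integral_mono_of_nonneg
      (f := fun u : E3 => ‖u - v‖ ^ ϱ * Real.exp (-a * ‖u‖ ^ 2))
      (Eventually.of_forall fun u =>
        mul_nonneg (rpow_nonneg (norm_nonneg _) _) (Real.exp_pos _).le)
      hg2int (Eventually.of_forall hdom2)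
    have hgval : (∫ u : E3, ((‖v‖/2) ^ ϱ * Real.exp (-a * ‖u‖ ^ 2)
          + Real.exp (-(a/8) * ‖v‖ ^ 2) * (F (u - v) + Real.exp (-(a/2) * ‖u‖ ^ 2))))
        = (‖v‖/2) ^ ϱ * Ga + Real.exp (-(a/8) * ‖v‖ ^ 2) * (KF + Gb) := by
      rw [integral_add hterm1 hterm2, integral_const_mul, integral_const_mul,
        integral_add (hFint.comp_sub_right v) hGb, integral_sub_right_eq_self F v]
    -- bound the two coefficients
    have hc1 : (‖v‖/2) ^ ϱ ≤ 4 ^ (-ϱ) * (1 + ‖v‖) ^ ϱ := by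
      have hq : (1 + ‖v‖)/4 ≤ ‖v‖/2 := by linarith
      have h1 := rpow_le_rpow_of_nonpos (by linarith : (0:ℝ) < (1 + ‖v‖)/4) hq hϱ₂.le
      calc (‖v‖/2) ^ ϱ ≤ ((1 + ‖v‖)/4) ^ ϱ := h1
        _ = (1 + ‖v‖) ^ ϱ / 4 ^ ϱ :=
            Real.div_rpow (by linarith : (0:ℝ) ≤ 1 + ‖v‖) (by norm_num : (0:ℝ) ≤ 4) ϱ
        _ = 4 ^ (-ϱ) * (1 + ‖v‖) ^ ϱ := by
            rw [rpow_neg (by norm_num : (0:ℝ) ≤ 4), div_eq_mul_inv, mul_comm]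
    have hc2 : Real.exp (-(a/8) * ‖v‖ ^ 2) ≤ Real.exp (18/a) * (1 + ‖v‖) ^ ϱ :=
      sp_exp_bound hϱ₁ ha (norm_nonneg v)
    calc (∫ u : E3, ‖u - v‖ ^ ϱ * Real.exp (-a * ‖u‖ ^ 2))
        ≤ (‖v‖/2) ^ ϱ * Ga + Real.exp (-(a/8) * ‖v‖ ^ 2) * (KF + Gb) := by
          rw [← hgval]; exact hIle
      _ ≤ (4 ^ (-ϱ) * (1 + ‖v‖) ^ ϱ) * Ga
            + (Real.exp (18/a) * (1 + ‖v‖) ^ ϱ) * (KF + Gb) := by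
          apply add_le_add
          · exact mul_le_mul_of_nonneg_right hc1 hGapos.le
          · exact mul_le_mul_of_nonneg_right hc2 (by linarith)
      _ = (Ga * 4 ^ (-ϱ) + Real.exp (18/a) * (KF + Gb)) * (1 + ‖v‖) ^ ϱ := by ring
      _ ≤ C * (1 + ‖v‖) ^ ϱ :=
          mul_le_mul_of_nonneg_right
            (by rw [hC]; linarith [mul_nonneg hKpos.le h2pos.le]) hPpos.le
end
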